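/- Given η > 0 and h ∈ ℕ, there exists an integer q such that the following holds. If A is an η-dense reduced hypergraph with index set [q], vertex classes P^{ij} and constituents A^{ijk}, then (i) there are indices λ(1) < ⋯ < λ(h) in [q], and (ii) for each pair 1 ≤ r < s ≤ h there are three vertices P^{λ(r)λ(s)}_red, P^{λ(r)λ(s)}_blue and P^{λ(r)λ(s)}_green in P^{λ(r)λ(s)} such that for every triple of indices 1 ≤ r < s < t ≤ h, the three vertices P^{λ(r)λ(s)}_red, P^{λ(r)λ(t)}_blue and P^{λ(s)λ(t)}_green form a hyperedge of A^{λ(r)λ(s)λ(t)}. -/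

import Mathlib

/-- A reduced hypergraph with index set `{0, 1, …, q−1}`: pairwise disjoint
nonempty vertex classes `P i j` (for distinct indices `i ≠ j`, with `P i j = P j i`)
and, for each triple `i < j < l`, a 3-partite 3-graph (constituent) whose edges
are triples with one vertex in each of `P i j`, `P i l`, `P j l`. -/
structure ReducedHG (q : ℕ) where
  P : ℕ → ℕ → Finset ℕ
  A : ℕ → ℕ → ℕ → Finset (ℕ × ℕ × ℕ)
  P_symm : ∀ i j, P i j = P j i
  P_nonempty : ∀ i j, i < q → j < q → i ≠ j → (P i j).Nonempty
  P_disjoint : ∀ i j i' j', i < j → j < q → i' < j' → j' < q →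
    (i, j) ≠ (i', j') → Disjoint (P i j) (P i' j')
  A_sub : ∀ i j l, i < j → j < l → l < q →
    ∀ e ∈ A i j l, e.1 ∈ P i j ∧ e.2.1 ∈ P i l ∧ e.2.2 ∈ P j l

/-- A reduced hypergraph is `η`-dense if each constituent has at least an
`η`-fraction of all possible edges. -/
def ReducedHG.Dense {q : ℕ} (R : ReducedHG q) (η : ℝ) : Prop :=
  ∀ i j l, i < j → j < l → l < q →
    η * ((R.P i j).card : ℝ) * ((R.P i l).card : ℝ) * ((R.P j l).card : ℝ) ≤
      ((R.A i j l).card : ℝ)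

open Finset

section Helpers

/-- Averaging: some `x ∈ V` has large total weight over `T`. -/
lemma exists_good_vertex (V : Finset ℕ) (hV : V.Nonempty) (T : Finset ℕ) (w : ℕ → ℕ → ℝ) (θ : ℝ)
    (havg : ∀ t ∈ T, θ * V.card ≤ ∑ x ∈ V, w x t) :
    ∃ x ∈ V, θ * T.card ≤ ∑ t ∈ T, w x t := by
  by_contra hcon
  push_neg at hcon
  have h1 : ∑ x ∈ V, ∑ t ∈ T, w x t < ∑ x ∈ V, θ * T.card :=
    sum_lt_sum_of_nonempty hV (fun x hx => hcon x hx)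
  have h2 : ∑ t ∈ T, θ * (V.card : ℝ) ≤ ∑ t ∈ T, ∑ x ∈ V, w x t := sum_le_sum havg
  rw [sum_comm] at h2
  rw [sum_const, nsmul_eq_mul] at h1
  rw [sum_const, nsmul_eq_mul] at h2
  nlinarith [h1, h2]

/-- Markov: if the average of `w` over `T` is at least `θ`, then at least a `θ/2`
fraction of `T` has `w ≥ θ/2`. -/
lemma shrink_reservoir (T : Finset ℕ) (w : ℕ → ℝ) (θ : ℝ) (hθ : 0 ≤ θ)
    (hw : ∀ t ∈ T, w t ≤ 1) (hsum : θ * T.card ≤ ∑ t ∈ T, w t) :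
    ∃ T' ⊆ T, (θ / 2) * T.card ≤ (T'.card : ℝ) ∧ ∀ t ∈ T', θ / 2 ≤ w t := by
  classical
  refine ⟨T.filter (fun t => θ/2 ≤ w t), filter_subset _ _, ?_, fun t ht => (mem_filter.mp ht).2⟩
  set T' := T.filter (fun t => θ/2 ≤ w t) with hT'
  have hsplit : ∑ t ∈ T, w t = ∑ t ∈ T', w t + ∑ t ∈ T.filter (fun t => ¬ (θ/2 ≤ w t)), w t :=
    (sum_filter_add_sum_filter_not T _ w).symm
  have hb1 : ∑ t ∈ T', w t ≤ (T'.card : ℝ) := by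
    calc ∑ t ∈ T', w t ≤ ∑ _t ∈ T', (1:ℝ) := sum_le_sum (fun t ht => hw t (filter_subset _ _ ht))
    _ = T'.card := by rw [sum_const, nsmul_eq_mul, mul_one]
  have hb2 : ∑ t ∈ T.filter (fun t => ¬ (θ/2 ≤ w t)), w t ≤ (θ/2) * (T.card : ℝ) := by
    calc ∑ t ∈ T.filter (fun t => ¬ (θ/2 ≤ w t)), w t
        ≤ ∑ _t ∈ T.filter (fun t => ¬ (θ/2 ≤ w t)), (θ/2 : ℝ) := by
          refine sum_le_sum (fun t ht => ?_)
          have := (mem_filter.mp ht).2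
          linarith [lt_of_not_ge this]
      _ = ((T.filter (fun t => ¬ (θ/2 ≤ w t))).card : ℝ) * (θ/2) := by
          rw [sum_const, nsmul_eq_mul]
      _ ≤ (T.card : ℝ) * (θ/2) := by
          have : ((T.filter (fun t => ¬ (θ/2 ≤ w t))).card : ℝ) ≤ (T.card : ℝ) := by
            exact_mod_cast card_le_card (filter_subset _ _)
          nlinarith
      _ = (θ/2) * (T.card : ℝ) := by ring
  nlinarith [hsum, hsplit, hb1, hb2]

/-- Covering pigeonhole: given many `θ`-dense subsets of `Ω`, some point lies in `k` of them. -/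
lemma covering_point (I : Finset ℕ) (Ω : Finset ℕ) (hΩ : Ω.Nonempty) (N : ℕ → Finset ℕ)
    (θ : ℝ) (hsub : ∀ i ∈ I, N i ⊆ Ω) (hdens : ∀ i ∈ I, θ * Ω.card ≤ ((N i).card : ℝ))
    (k : ℕ) (hk : (k : ℝ) ≤ θ * I.card) :
    ∃ z ∈ Ω, ∃ K ⊆ I, K.card = k ∧ ∀ i ∈ K, z ∈ N i := by
  classical
  have key : ∑ i ∈ I, ((N i).card : ℝ) = ∑ z ∈ Ω, ((I.filter (fun i => z ∈ N i)).card : ℝ) := by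
    have h1 : ∀ i ∈ I, ((N i).card : ℝ) = ∑ z ∈ Ω, (if z ∈ N i then (1:ℝ) else 0) := by
      intro i hi
      rw [sum_ite_mem]
      rw [inter_eq_right.mpr (hsub i hi)]
      rw [sum_const, nsmul_eq_mul, mul_one]
    rw [sum_congr rfl h1, sum_comm]
    refine sum_congr rfl (fun z _ => ?_)
    rw [card_filter]
    push_cast
    rfl
  obtain ⟨z, hzΩ, hz⟩ : ∃ z ∈ Ω, (k : ℝ) ≤ ((I.filter (fun i => z ∈ N i)).card : ℝ) := by
    by_contra hcon
    push_neg at hcon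
    have h1 : ∑ z ∈ Ω, ((I.filter (fun i => z ∈ N i)).card : ℝ) < ∑ _z ∈ Ω, (k:ℝ) :=
      sum_lt_sum_of_nonempty hΩ (fun z hz => hcon z hz)
    have h2 : ∑ i ∈ I, θ * (Ω.card:ℝ) ≤ ∑ i ∈ I, ((N i).card : ℝ) := sum_le_sum hdens
    rw [sum_const, nsmul_eq_mul] at h1
    rw [sum_const, nsmul_eq_mul] at h2
    rw [key] at h2
    have hΩpos : (0:ℝ) < Ω.card := by exact_mod_cast card_pos.mpr hΩ
    nlinarith
  have hk' : k ≤ (I.filter (fun i => z ∈ N i)).card := by exact_mod_cast hz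
  obtain ⟨K, hK, hKcard⟩ := exists_subset_card_eq hk'
  exact ⟨z, hzΩ, K, hK.trans (filter_subset _ _), hKcard,
    fun i hi => (mem_filter.mp (hK hi)).2⟩

/-- The `n` smallest elements of a finset. -/
lemma take_smallest : ∀ (n : ℕ) (s : Finset ℕ), n ≤ s.card →
    ∃ pool ⊆ s, pool.card = n ∧ ∀ x ∈ pool, ∀ y ∈ s \ pool, x < y := by
  intro n
  induction n with
  | zero => intro s _; exact ⟨∅, empty_subset _, card_empty, by simp⟩
  | succ n ihn =>
    intro s hs
    have hne : s.Nonempty := by rw [← card_pos]; omega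
    set a := s.min' hne with ha
    have haS : a ∈ s := s.min'_mem hne
    have hcard : n ≤ (s.erase a).card := by rw [card_erase_of_mem haS]; omega
    obtain ⟨pool', hsub', hcard', hprop'⟩ := ihn (s.erase a) hcard
    have hapool' : a ∉ pool' := fun hmem => (notMem_erase a s) (hsub' hmem)
    refine ⟨insert a pool', ?_, ?_, ?_⟩
    · intro x hx
      rcases mem_insert.mp hx with hxa | hx
      · exact hxa ▸ haS
      · exact (erase_subset _ _) (hsub' hx)
    · rw [card_insert_of_notMem hapool', hcard']
    · intro x hx y hy
      have hyS : y ∈ s := (mem_sdiff.mp hy).1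
      have hynotin : y ∉ insert a pool' := (mem_sdiff.mp hy).2
      have hya : y ≠ a := fun hEq => hynotin (hEq ▸ mem_insert_self a pool')
      have hy' : y ∈ (s.erase a) \ pool' := by
        rw [mem_sdiff, mem_erase]
        exact ⟨⟨hya, hyS⟩, fun hmem => hynotin (mem_insert_of_mem hmem)⟩
      rcases mem_insert.mp hx with hxa | hx
      · subst hxa
        exact lt_of_le_of_ne (s.min'_le y hyS) (Ne.symm hya)
      · exact hprop' x hx y hy'
  
/-- Two elements of a finset with the same number of smaller elements are equal. -/
lemma rank_unique (D : Finset ℕ) (t₁ t₂ : ℕ) (h₁ : t₁ ∈ D) (h₂ : t₂ ∈ D)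
    (he : (D.filter (· < t₁)).card = (D.filter (· < t₂)).card) : t₁ = t₂ := by
  classical
  by_contra hne
  wlog hlt : t₁ < t₂ generalizing t₁ t₂
  · exact this t₂ t₁ h₂ h₁ he.symm (Ne.symm hne) (by omega)
  have hss : D.filter (· < t₁) ⊂ D.filter (· < t₂) := by
    constructor
    · intro x hx
      rw [mem_filter] at hx ⊢
      exact ⟨hx.1, lt_trans hx.2 hlt⟩
    · intro hcon
      have : t₁ ∈ D.filter (· < t₁) := hcon (mem_filter.mpr ⟨h₁, hlt⟩)
      simp at this
  exact absurd he (Nat.ne_of_lt (card_lt_card hss))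

end Helpers

section Helpers2
open Finset

lemma rank_orderIso (h : ℕ) (Λ : Finset ℕ) (hΛ : Λ.card = h) (p : Fin h) :
    (Λ.filter (· < (Λ.orderIsoOfFin hΛ p : ℕ))).card = p.val := by
  classical
  have himg : Λ.filter (· < (Λ.orderIsoOfFin hΛ p : ℕ)) =
      (Finset.univ.filter (fun j : Fin h => j < p)).image
        (fun j => (Λ.orderIsoOfFin hΛ j : ℕ)) := by
    ext x
    simp only [mem_filter, mem_image, mem_univ, true_and]
    constructor
    · rintro ⟨hxΛ, hxlt⟩
      obtain ⟨j, hj⟩ := (Λ.orderIsoOfFin hΛ).surjective ⟨x, hxΛ⟩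
      have hjx : (Λ.orderIsoOfFin hΛ j : ℕ) = x := by rw [hj]
      refine ⟨j, ?_, hjx⟩
      by_contra hcon
      push_neg at hcon
      have := (Λ.orderIsoOfFin hΛ).monotone hcon
      have : (Λ.orderIsoOfFin hΛ p : ℕ) ≤ (Λ.orderIsoOfFin hΛ j : ℕ) := this
      omega
    · rintro ⟨j, hjp, hjx⟩
      refine ⟨hjx ▸ (Λ.orderIsoOfFin hΛ j).2, ?_⟩
      rw [← hjx]
      exact (Λ.orderIsoOfFin hΛ).strictMono hjp
  rw [himg, card_image_of_injective _ (fun a b hab => ?_), ]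
  · have : Finset.univ.filter (fun j : Fin h => j < p) = Finset.Iio p := by ext j; simp
    rw [this, Fin.card_Iio]
  · have := Subtype.ext hab
    exact (Λ.orderIsoOfFin hΛ).injective this

lemma rank_lt_card (Λ : Finset ℕ) (j : ℕ) (hj : j ∈ Λ) :
    (Λ.filter (· < j)).card < Λ.card := by
  classical
  refine card_lt_card ⟨filter_subset _ _, fun hcon => ?_⟩
  have := hcon hj
  simp at this

lemma filter_split (K U : Finset ℕ) (t : ℕ) (hK : ∀ x ∈ K, x < t) (hU : ∀ x ∈ U, t < x) :
    (K ∪ {t} ∪ U).filter (· < t) = K := by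
  classical
  ext x
  simp only [mem_filter, mem_union, mem_singleton]
  constructor
  · rintro ⟨(h1 | h1) | h1, h2⟩
    · exact h1
    · omega
    · exact absurd (hU x h1) (by omega)
  · intro hx
    exact ⟨Or.inl (Or.inl hx), hK x hx⟩

lemma card_split (K U : Finset ℕ) (t : ℕ) (hK : ∀ x ∈ K, x < t) (hU : ∀ x ∈ U, t < x) :
    (K ∪ {t} ∪ U).card = K.card + 1 + U.card := by
  classical
  rw [card_union_of_disjoint, card_union_of_disjoint]
  · simp
  · rw [disjoint_singleton_right]
    intro hcon
    exact absurd (hK t hcon) (lt_irrefl t)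
  · rw [disjoint_left]
    intro x hx hxU
    rcases mem_union.mp hx with hx | hx
    · exact absurd (lt_trans (hK x hx) (hU x hxU)) (lt_irrefl x)
    · rw [mem_singleton] at hx
      subst hx
      exact absurd (hU x hxU) (lt_irrefl x)

end Helpers2

section Helpers3
open Finset

lemma card_L_eq_sum (X Y : Finset ℕ) (L : Finset (ℕ × ℕ)) (hsub : L ⊆ X ×ˢ Y) :
    L.card = ∑ y ∈ X, (Y.filter (fun z => (y, z) ∈ L)).card := by
  classical
  rw [card_eq_sum_card_fiberwise (f := fun e => e.1) (t := X)
    (fun e he => (mem_product.mp (hsub he)).1)]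
  refine sum_congr rfl (fun y _ => ?_)
  refine card_bij' (fun e _ => e.2) (fun z _ => (y, z)) ?_ ?_ ?_ ?_
  · intro e he
    rw [mem_filter] at he ⊢
    have hee : (y, e.2) = e := Prod.ext he.2.symm rfl
    refine ⟨(mem_product.mp (hsub he.1)).2, ?_⟩
    rw [show ((y, e.2) : ℕ × ℕ) = e from hee]
    exact he.1
  · intro z hz
    rw [mem_filter] at hz ⊢
    exact ⟨hz.2, rfl⟩
  · intro e he
    rw [mem_filter] at he
    exact Prod.ext he.2.symm rfl
  · intro z _
    rfl

lemma card_A_eq_sum (P1 P2 P3 : Finset ℕ) (A : Finset (ℕ × ℕ × ℕ))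
    (hsub : ∀ e ∈ A, e.1 ∈ P1 ∧ e.2.1 ∈ P2 ∧ e.2.2 ∈ P3) :
    A.card = ∑ x ∈ P1, ((P2 ×ˢ P3).filter (fun yz => (x, yz.1, yz.2) ∈ A)).card := by
  classical
  rw [card_eq_sum_card_fiberwise (f := fun e => e.1) (t := P1) (fun e he => (hsub e he).1)]
  refine sum_congr rfl (fun x _ => ?_)
  refine card_bij' (fun e _ => e.2) (fun yz _ => (x, yz)) ?_ ?_ ?_ ?_
  · intro e he
    rw [mem_filter] at he ⊢
    have hee : (x, e.2.1, e.2.2) = e := by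
      have h2 : (e.2.1, e.2.2) = e.2 := rfl
      exact Prod.ext he.2.symm h2
    constructor
    · rw [mem_product]
      exact ⟨(hsub e he.1).2.1, (hsub e he.1).2.2⟩
    · rw [show ((x, e.2.1, e.2.2) : ℕ × ℕ × ℕ) = e from hee]
      exact he.1
  · intro yz hyz
    rw [mem_filter] at hyz ⊢
    refine ⟨hyz.2, rfl⟩
  · intro e he
    rw [mem_filter] at he
    exact Prod.ext he.2.symm rfl
  · intro yz _
    rfl

end Helpers3


theorem hyperRamsey (k : ℕ) : ∀ (κ : Type) (_ : Fintype κ) (m : ℕ),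
    ∃ N : ℕ, ∀ S : Finset ℕ, N ≤ S.card → ∀ f : Finset ℕ → κ,
      ∃ M, M ⊆ S ∧ M.card = m ∧
        ∀ A, A ⊆ M → A.card = k → ∀ B, B ⊆ M → B.card = k → f A = f B := by
  classical
  induction k with
  | zero =>
    intro κ _ m
    refine ⟨m, fun S hS f => ?_⟩
    obtain ⟨M, hMS, hMcard⟩ := exists_subset_card_eq hS
    refine ⟨M, hMS, hMcard, fun A _ hA B _ hB => ?_⟩
    rw [card_eq_zero.mp hA, card_eq_zero.mp hB]
  | succ k ih =>
    intro κ inst m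
    let F : ℕ → ℕ := fun m' => (ih κ inst m').choose
    have hF : ∀ m', ∀ S : Finset ℕ, F m' ≤ S.card → ∀ f : Finset ℕ → κ,
        ∃ M, M ⊆ S ∧ M.card = m' ∧
          ∀ A, A ⊆ M → A.card = k → ∀ B, B ⊆ M → B.card = k → f A = f B :=
      fun m' => (ih κ inst m').choose_spec
    let g : ℕ → ℕ := fun j => Nat.rec 0 (fun _ prev => F prev + 1) j
    have hgsucc : ∀ j, g (j + 1) = F (g j) + 1 := fun j => rfl
    have aux : ∀ (j : ℕ) (S : Finset ℕ) (f : Finset ℕ → κ), g j ≤ S.card →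
        ∃ (M₀ : Finset ℕ) (c : ℕ → κ), M₀ ⊆ S ∧ M₀.card = j ∧
          ∀ a ∈ M₀, ∀ B, B ⊆ M₀ → (∀ x ∈ B, a < x) → B.card = k → f (insert a B) = c a := by
      intro j
      induction j with
      | zero => intro S f _; exact ⟨∅, fun _ => f ∅, empty_subset _, card_empty, by simp⟩
      | succ j ihj =>
        intro S f hScard
        rw [hgsucc] at hScard
        have hSne : S.Nonempty := by rw [← card_pos]; omega
        set a := S.min' hSne with ha
        have haS : a ∈ S := S.min'_mem hSne
        have hS₁card : F (g j) ≤ (S.erase a).card := by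
          rw [card_erase_of_mem haS]; omega
        obtain ⟨M₁, hM₁sub, hM₁card, hM₁const⟩ :=
          hF (g j) (S.erase a) hS₁card (fun B => f (insert a B))
        obtain ⟨M', c', hM'sub, hM'prop⟩ := ihj M₁ f (le_of_eq hM₁card.symm)
        obtain ⟨hM'card, hM'prop⟩ := hM'prop
        have haM' : a ∉ M' := fun hmem => (notMem_erase a S) (hM₁sub (hM'sub hmem))
        have haM₁ : a ∉ M₁ := fun hmem => (notMem_erase a S) (hM₁sub hmem)
        set ca := if hex : ∃ B, B ⊆ M₁ ∧ B.card = k then f (insert a hex.choose) else f ∅ with hca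
        refine ⟨insert a M', fun x => if x = a then ca else c' x, ?_, ?_, ?_⟩
        · intro x hx
          rcases mem_insert.mp hx with rfl | hx
          · exact haS
          · exact (erase_subset _ _) (hM₁sub (hM'sub hx))
        · rw [card_insert_of_notMem haM', hM'card]
        · intro a' ha' B hBsub hBgt hBcard
          rcases mem_insert.mp ha' with ha'a | ha'
          · -- a' = a
            have hBM' : B ⊆ M₁ := by
              intro x hx
              rcases mem_insert.mp (hBsub hx) with hxa | hx'
              · exact absurd (hBgt x hx) (by rw [hxa, ha'a] at *; exact lt_irrefl _)
              · exact hM'sub hx'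
            have hex : ∃ B', B' ⊆ M₁ ∧ B'.card = k := ⟨B, hBM', hBcard⟩
            have h1 : f (insert a' B) = f (insert a' hex.choose) := by
              rw [ha'a]
              exact hM₁const B hBM' hBcard hex.choose hex.choose_spec.1 hex.choose_spec.2
            rw [h1, ha'a]
            simp [hca, dif_pos hex]
          · -- a' ∈ M'
            have haa' : a < a' := by
              have hmem : a' ∈ S.erase a := hM₁sub (hM'sub ha')
              exact lt_of_le_of_ne (S.min'_le a' ((erase_subset _ _) hmem))
                (fun hEq => (notMem_erase a S) (hEq ▸ hmem))
            have hBM' : B ⊆ M' := by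
              intro x hx
              rcases mem_insert.mp (hBsub hx) with hxa | hx'
              · exact absurd (hBgt x hx) (by rw [hxa]; exact not_lt.mpr (le_of_lt haa'))
              · exact hx'
            have hne : a' ≠ a := ne_of_gt haa'
            rw [hM'prop a' ha' B hBM' hBgt hBcard]
            simp only [if_neg hne]
    -- main construction
    refine ⟨g (Fintype.card κ * m + 1), fun S hS f => ?_⟩
    obtain ⟨M₀, c, hM₀S, hM₀card, hM₀prop⟩ := aux (Fintype.card κ * m + 1) S f hS
    have hκ : Nonempty κ := ⟨f ∅⟩
    obtain ⟨v, hv⟩ : ∃ v : κ, m ≤ (M₀.filter (fun x => c x = v)).card := by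
      obtain ⟨y, _, hy⟩ := Finset.exists_le_card_fiber_of_mul_le_card_of_maps_to (s := M₀)
        (t := (Finset.univ : Finset κ)) (f := c) (n := m) (fun a _ => mem_univ _)
        univ_nonempty (by simpa [hM₀card, card_univ] using Nat.le_succ (Fintype.card κ * m))
      exact ⟨y, hy⟩
    obtain ⟨M, hMfib, hMcard⟩ := exists_subset_card_eq hv
    have hMM₀ : M ⊆ M₀ := hMfib.trans (filter_subset _ _)
    have key : ∀ A, A ⊆ M → A.card = k + 1 → f A = v := by
      intro A hAM hAcard
      have hAne : A.Nonempty := by rw [← card_pos]; omega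
      set a := A.min' hAne with ha
      have haA : a ∈ A := A.min'_mem hAne
      have haM : a ∈ M := hAM haA
      have h1 : f (insert a (A.erase a)) = c a := by
        refine hM₀prop a (hMM₀ haM) (A.erase a) ?_ ?_ ?_
        · exact (erase_subset _ _).trans (hAM.trans hMM₀)
        · intro x hx
          exact lt_of_le_of_ne (A.min'_le x ((erase_subset _ _) hx))
            (fun hEq => (notMem_erase a A) (hEq ▸ hx))
        · rw [card_erase_of_mem haA]; omega
      rw [insert_erase haA] at h1
      have h2 : c a = v := by
        have := hMfib haM; simp only [mem_filter] at this; exact this.2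
      rw [h1, h2]
    refine ⟨M, hMM₀.trans hM₀S, hMcard, fun A hA hAc B hB hBc => ?_⟩
    rw [key A hA hAc, key B hB hBc]


section TwoDim

def B2f (K : ℕ) : ℕ → ℕ
  | 0 => 0
  | n+1 => K * (B2f K n + 1) + 1

variable (δ : ℝ) (X : ℕ → Finset ℕ) (L : ℕ → ℕ → Finset (ℕ × ℕ)) (I : Finset ℕ)

/-- degree of `y` towards class `X t` in `L a t` -/
def deg2 (a t y : ℕ) : ℕ := ((X t).filter (fun z => (y, z) ∈ L a t)).card

lemma greedy2_step (hδ : 0 < δ)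
    (hne : ∀ i ∈ I, (X i).Nonempty)
    (hsub : ∀ r ∈ I, ∀ s ∈ I, r < s → L r s ⊆ X r ×ˢ X s)
    (hdens : ∀ r ∈ I, ∀ s ∈ I, r < s → δ * (X r).card * (X s).card ≤ ((L r s).card : ℝ))
    (a : ℕ) (ha : a ∈ I) (T : Finset ℕ) (hT : T ⊆ I) (hat : ∀ t ∈ T, a < t) :
    ∃ y ∈ X a, ∃ T' ⊆ T, (δ/2) * T.card ≤ (T'.card : ℝ) ∧
      ∀ t ∈ T', (δ/2) * (X t).card ≤ (deg2 X L a t y : ℝ) := by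
  classical
  set w : ℕ → ℕ → ℝ := fun y t => (deg2 X L a t y : ℝ) / (X t).card with hw
  have hXpos : ∀ t ∈ T, (0:ℝ) < (X t).card := by
    intro t ht
    exact_mod_cast card_pos.mpr (hne t (hT ht))
  have havg : ∀ t ∈ T, δ * ((X a).card : ℝ) ≤ ∑ y ∈ X a, w y t := by
    intro t ht
    have hsum : ((L a t).card : ℝ) = ∑ y ∈ X a, (deg2 X L a t y : ℝ) := by
      rw [card_L_eq_sum (X a) (X t) (L a t) (hsub a ha t (hT ht) (hat t ht))]
      push_cast
      rfl
    have hd := hdens a ha t (hT ht) (hat t ht)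
    have : ∑ y ∈ X a, w y t = (∑ y ∈ X a, (deg2 X L a t y : ℝ)) / (X t).card := by
      rw [hw]
      rw [← sum_div]
    rw [this, ← hsum]
    rw [le_div_iff₀ (hXpos t ht)]
    nlinarith [hd]
  obtain ⟨y, hy, hysum⟩ := exists_good_vertex (X a) (hne a ha) T w δ havg
  obtain ⟨T', hT'sub, hT'card, hT'prop⟩ := shrink_reservoir T (w y) δ (le_of_lt hδ)
    (fun t ht => by
      rw [hw]
      rw [div_le_one (hXpos t ht)]
      exact_mod_cast card_le_card (filter_subset _ _)) hysum
  refine ⟨y, hy, T', hT'sub, hT'card, fun t ht => ?_⟩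
  have h1 := hT'prop t ht
  rw [hw] at h1
  have h2 := hXpos t (hT'sub ht)
  rw [le_div_iff₀ h2] at h1
  linarith
lemma B2f_pos (K : ℕ) (n : ℕ) : 0 < B2f K (n+1) := by
  simp [B2f]

lemma greedy2_aux (hδ : 0 < δ)
    (hne : ∀ i ∈ I, (X i).Nonempty)
    (hsub : ∀ r ∈ I, ∀ s ∈ I, r < s → L r s ⊆ X r ×ˢ X s)
    (hdens : ∀ r ∈ I, ∀ s ∈ I, r < s → δ * (X r).card * (X s).card ≤ ((L r s).card : ℝ)) :
    ∀ (n : ℕ) (C T : Finset ℕ) (b : ℕ → ℕ),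
      C ⊆ I → T ⊆ I → (∀ c ∈ C, ∀ t ∈ T, c < t) →
      B2f (2 * (⌈1/δ⌉₊ + 1)) n ≤ T.card →
      (∀ r ∈ C, b r ∈ X r ∧ (∀ s ∈ C, r < s → (δ/2) * (X s).card ≤ (deg2 X L r s (b r) : ℝ))
        ∧ (∀ t ∈ T, (δ/2) * (X t).card ≤ (deg2 X L r t (b r) : ℝ))) →
      ∃ (C' : Finset ℕ) (b' : ℕ → ℕ), C' ⊆ I ∧ C'.card = C.card + n ∧
        ∀ r ∈ C', b' r ∈ X r ∧ ∀ s ∈ C', r < s → (δ/2) * (X s).card ≤ (deg2 X L r s (b' r) : ℝ) := by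
  intro n
  induction n with
  | zero =>
    intro C T b hCI _ _ _ hinv
    exact ⟨C, b, hCI, by omega, fun r hr => ⟨(hinv r hr).1, fun s hs => (hinv r hr).2.1 s hs⟩⟩
  | succ n ihn =>
    intro C T b hCI hTI hCT hTcard hinv
    set K := 2 * (⌈1/δ⌉₊ + 1) with hK
    have hTne : T.Nonempty := by
      rw [← card_pos]
      have : 0 < B2f K (n+1) := B2f_pos K n
      omega
    set a := T.min' hTne with ha
    have haT : a ∈ T := T.min'_mem hTne
    have haI : a ∈ I := hTI haT
    set T₀ := T.erase a with hT₀
    have hT₀sub : T₀ ⊆ T := erase_subset _ _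
    have hat₀ : ∀ t ∈ T₀, a < t := by
      intro t ht
      exact lt_of_le_of_ne (T.min'_le t (hT₀sub ht)) (Ne.symm (mem_erase.mp ht).1)
    obtain ⟨y, hyX, T₂, hT₂sub, hT₂card, hT₂prop⟩ :=
      greedy2_step δ X L I hδ hne hsub hdens a haI T₀ (hT₀sub.trans hTI) hat₀
    -- size chain
    have hKcast : (1:ℝ) ≤ (δ/2) * K := by
      have h1 : (1:ℝ)/δ ≤ (⌈1/δ⌉₊ : ℝ) := Nat.le_ceil _
      have : (K:ℝ) = 2 * ((⌈1/δ⌉₊ : ℝ) + 1) := by rw [hK]; push_cast; ring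
      rw [this]
      have h2 : (1:ℝ)/δ + 1 ≤ (⌈1/δ⌉₊ : ℝ) + 1 := by linarith
      calc (1:ℝ) = δ * (1/δ) := by field_simp
      _ ≤ δ * (1/δ + 1) := by nlinarith
      _ ≤ δ * ((⌈1/δ⌉₊ : ℝ) + 1) := by nlinarith
      _ = δ/2 * (2 * ((⌈1/δ⌉₊ : ℝ) + 1)) := by ring
    have hT₂big : B2f K n ≤ T₂.card := by
      have h0 : B2f K (n+1) = K * (B2f K n + 1) + 1 := rfl
      have h1 : K * (B2f K n + 1) ≤ T₀.card := by
        rw [hT₀, card_erase_of_mem haT]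
        omega
      have h2 : ((B2f K n : ℝ) + 1) ≤ (δ/2) * T₀.card := by
        have : ((K : ℝ)) * ((B2f K n : ℝ) + 1) ≤ (T₀.card : ℝ) := by exact_mod_cast h1
        nlinarith [this, hKcast, hδ]
      have h3 : ((B2f K n : ℝ)) + 1 ≤ (T₂.card : ℝ) := le_trans h2 hT₂card
      have : (B2f K n : ℝ) ≤ (T₂.card : ℝ) := by linarith
      exact_mod_cast this
    -- new invariant
    set b' := Function.update b a y with hb'
    have haC : a ∉ C := fun hmem => absurd (hCT a hmem a haT) (lt_irrefl a)
    have hinv' : ∀ r ∈ insert a C, b' r ∈ X r ∧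
        (∀ s ∈ insert a C, r < s → (δ/2) * (X s).card ≤ (deg2 X L r s (b' r) : ℝ))
        ∧ (∀ t ∈ T₂, (δ/2) * (X t).card ≤ (deg2 X L r t (b' r) : ℝ)) := by
      intro r hr
      rcases mem_insert.mp hr with hra | hrC
      · subst hra
        rw [hb', Function.update_self]
        refine ⟨hyX, ?_, ?_⟩
        · intro s hs hrs
          rcases mem_insert.mp hs with hsa | hsC
          · omega
          · exact absurd (hCT s hsC a haT) (by omega)
        · intro t ht
          exact hT₂prop t ht
      · have hbr : b' r = b r := Function.update_of_ne (by
          intro hEq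
          exact haC (hEq ▸ hrC)) _ _
        rw [hbr]
        obtain ⟨h1, h2, h3⟩ := hinv r hrC
        refine ⟨h1, ?_, fun t ht => h3 t (hT₀sub (hT₂sub ht))⟩
        intro s hs hrs
        rcases mem_insert.mp hs with hsa | hsC
        · subst hsa
          exact h3 a haT
        · exact h2 s hsC hrs
    have hres := ihn (insert a C) T₂ b' (by
        intro x hx
        rcases mem_insert.mp hx with h | h
        · exact h ▸ haI
        · exact hCI h)
      ((hT₂sub.trans hT₀sub).trans hTI)
      (by
        intro c hc t ht
        rcases mem_insert.mp hc with h | h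
        · exact h ▸ hat₀ t (hT₂sub ht)
        · exact hCT c h t (hT₀sub (hT₂sub ht)))
      hT₂big hinv'
    obtain ⟨C', b'', hC'I, hC'card, hC'inv⟩ := hres
    refine ⟨C', b'', hC'I, ?_, hC'inv⟩
    rw [hC'card, card_insert_of_notMem haC]
    omega

theorem twoDim (δ : ℝ) (hδ : 0 < δ) (m : ℕ) :
    ∃ n : ℕ, ∀ (I : Finset ℕ) (X : ℕ → Finset ℕ) (L : ℕ → ℕ → Finset (ℕ × ℕ)),
      n ≤ I.card → (∀ i ∈ I, (X i).Nonempty) →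
      (∀ r ∈ I, ∀ s ∈ I, r < s → L r s ⊆ X r ×ˢ X s) →
      (∀ r ∈ I, ∀ s ∈ I, r < s → δ * (X r).card * (X s).card ≤ ((L r s).card : ℝ)) →
      ∃ (J : Finset ℕ) (b g : ℕ → ℕ), J ⊆ I ∧ J.card = m ∧
        (∀ j ∈ J, b j ∈ X j ∧ g j ∈ X j) ∧
        (∀ r ∈ J, ∀ s ∈ J, r < s → (b r, g s) ∈ L r s) := by
  classical
  set npool := 2 * (m + 1) * (⌈1/δ⌉₊ + 1) with hnpool
  set H2 := npool + 1 + m with hH2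
  obtain ⟨N2, hN2⟩ := hyperRamsey m (Fin m → Bool) inferInstance H2
  refine ⟨B2f (2 * (⌈1/δ⌉₊ + 1)) N2, ?_⟩
  intro I X L hIcard hne hsub hdens
  -- greedy phase
  obtain ⟨C, b, hCI, hCcard, hCinv⟩ := greedy2_aux δ X L I hδ hne hsub hdens N2 ∅ I
    (fun _ => 0) (empty_subset _) (le_refl I) (by simp) hIcard (by simp)
  rw [card_empty, zero_add] at hCcard
  -- Ramsey phase
  set Solv2 : Finset ℕ → ℕ → Prop :=
    fun K t => ∃ z, z ∈ X t ∧ ∀ r ∈ K, (b r, z) ∈ L r t with hSolv2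
  set χ : Finset ℕ → (Fin m → Bool) := fun D p =>
    if (∀ t ∈ D, (D.filter (· < t)).card = p.val → Solv2 (D.filter (· < t)) t)
    then true else false with hχ
  obtain ⟨M, hMC, hMcard, hMmono⟩ := hN2 C (le_of_eq hCcard.symm) χ
  -- split M
  obtain ⟨pool, hpoolM, hpoolcard, hpoolmin⟩ := take_smallest npool M (by omega)
  have hRstcard : (M \ pool).card = 1 + m := by
    rw [card_sdiff_of_subset hpoolM]
    omega
  have hRstne : (M \ pool).Nonempty := by
    rw [← card_pos, hRstcard]; omega
  set t₀ := (M \ pool).min' hRstne with ht₀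
  have ht₀M : t₀ ∈ M := (mem_sdiff.mp ((M \ pool).min'_mem hRstne)).1
  have hpoolt₀ : ∀ x ∈ pool, x < t₀ := fun x hx => hpoolmin x hx t₀ ((M \ pool).min'_mem hRstne)
  set U := (M \ pool).erase t₀ with hU
  have hUcard : U.card = m := by
    rw [hU, card_erase_of_mem ((M \ pool).min'_mem hRstne), hRstcard]
    omega
  have hUgt : ∀ u ∈ U, t₀ < u := by
    intro u hu
    exact lt_of_le_of_ne ((M \ pool).min'_le u (erase_subset _ _ hu))
      (Ne.symm (mem_erase.mp hu).1)
  have hUM : U ⊆ M := fun u hu => (mem_sdiff.mp (erase_subset _ _ hu)).1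
  -- the invariant on C as density of neighbourhoods
  have hinvC : ∀ r ∈ C, ∀ s ∈ C, r < s →
      (δ/2) * ((X s).card : ℝ) ≤ (((X s).filter (fun z => (b r, z) ∈ L r s)).card : ℝ) := by
    intro r hr s hs hrs
    exact (hCinv r hr).2 s hs hrs
  -- exhibits: each bit is true for some m-subset of M, hence for all by monochromaticity
  have hbits : ∀ p : Fin m, ∀ D, D ⊆ M → D.card = m → χ D p = true := by
    intro p D hDM hDcard
    -- construct the exhibit D'
    have ht₀I : t₀ ∈ I := hCI (hMC ht₀M)
    obtain ⟨z, hzX, K, hKpool, hKcard, hKin⟩ := covering_point pool (X t₀)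
      (hne t₀ ht₀I) (fun i => (X t₀).filter (fun z => (b i, z) ∈ L i t₀)) (δ/2)
      (fun i _ => filter_subset _ _)
      (fun i hi => hinvC i (hMC (hpoolM hi)) t₀ (hMC ht₀M) (hpoolt₀ i hi))
      p.val
      (by
        rw [hpoolcard]
        have hp : (p.val : ℝ) < (m : ℝ) + 1 := by
          have h2 := p.2
          have h3 : (p.val:ℝ) < (m:ℝ) := by exact_mod_cast h2
          linarith
        have hc : (1:ℝ) ≤ δ * ((⌈1/δ⌉₊ : ℝ) + 1) := by
          have h1 : (1:ℝ)/δ ≤ (⌈1/δ⌉₊ : ℝ) := Nat.le_ceil _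
          calc (1:ℝ) = δ * (1/δ) := by field_simp
          _ ≤ δ * ((⌈1/δ⌉₊ : ℝ) + 1) := by nlinarith
        have : ((npool : ℝ)) = 2 * ((m:ℝ) + 1) * ((⌈1/δ⌉₊ : ℝ) + 1) := by
          rw [hnpool]; push_cast; ring
        rw [this]
        calc (p.val : ℝ) ≤ (m : ℝ) + 1 := by linarith
        _ = 1 * ((m:ℝ)+1) := by ring
        _ ≤ (δ * ((⌈1/δ⌉₊ : ℝ) + 1)) * ((m:ℝ)+1) := by nlinarith
        _ = δ/2 * (2 * ((m:ℝ) + 1) * ((⌈1/δ⌉₊ : ℝ) + 1)) := by ring)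
    have hpm : p.val < m := p.2
    obtain ⟨U', hU'U, hU'card⟩ := exists_subset_card_eq
      (show m - 1 - p.val ≤ U.card by omega)
    set D' := K ∪ {t₀} ∪ U' with hD'
    have hKlt : ∀ x ∈ K, x < t₀ := fun x hx => hpoolt₀ x (hKpool hx)
    have hU'gt : ∀ x ∈ U', t₀ < x := fun x hx => hUgt x (hU'U hx)
    have hD'card : D'.card = m := by
      rw [hD', card_split K U' t₀ hKlt hU'gt, hKcard, hU'card]
      have := p.2
      omega
    have hD'M : D' ⊆ M := by
      intro x hx
      rw [hD'] at hx
      rcases mem_union.mp hx with hx | hx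
      · rcases mem_union.mp hx with hx | hx
        · exact hpoolM (hKpool hx)
        · rw [mem_singleton] at hx; exact hx ▸ ht₀M
      · exact hUM (hU'U hx)
    have hD'filter : D'.filter (· < t₀) = K := by
      rw [hD']; exact filter_split K U' t₀ hKlt hU'gt
    have ht₀D' : t₀ ∈ D' := by
      rw [hD']
      exact mem_union_left _ (mem_union_right _ (mem_singleton_self t₀))
    have hχD' : χ D' p = true := by
      rw [hχ]
      simp only
      rw [if_pos]
      intro t ht hrank
      have hteq : t = t₀ := by
        refine rank_unique D' t t₀ ht ht₀D' ?_
        rw [hD'filter, hKcard, hrank]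
      subst hteq
      rw [hD'filter]
      exact ⟨z, hzX, fun r hr => (mem_filter.mp (hKin r hr)).2⟩
    rw [← hχD']
    exact congr_fun (hMmono D hDM hDcard D' hD'M hD'card) p
  -- final extraction
  obtain ⟨Λ, hΛM, hΛcard, _⟩ := take_smallest m M (by omega)
  have hsolv : ∀ j ∈ Λ, Solv2 (Λ.filter (· < j)) j := by
    intro j hj
    have hrank : (Λ.filter (· < j)).card < m := by
      have := rank_lt_card Λ j hj
      omega
    set p : Fin m := ⟨(Λ.filter (· < j)).card, hrank⟩ with hp
    have := hbits p Λ hΛM hΛcard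
    rw [hχ] at this
    simp only at this
    by_cases hcond : (∀ t ∈ Λ, (Λ.filter (· < t)).card = p.val →
        Solv2 (Λ.filter (· < t)) t)
    · exact hcond j hj rfl
    · rw [if_neg hcond] at this
      exact absurd this (by simp)
  set g : ℕ → ℕ := fun j =>
    if hj : Solv2 (Λ.filter (· < j)) j then hj.choose else 0 with hg
  refine ⟨Λ, b, g, fun x hx => hCI (hMC (hΛM hx)), hΛcard, ?_, ?_⟩
  · intro j hj
    have hjC : j ∈ C := hMC (hΛM hj)
    refine ⟨(hCinv j hjC).1, ?_⟩
    rw [hg]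
    simp only
    rw [dif_pos (hsolv j hj)]
    exact (hsolv j hj).choose_spec.1
  · intro r hr s hs hrs
    have hgs : g s = (hsolv s hs).choose := by
      rw [hg]; simp only; rw [dif_pos (hsolv s hs)]
    rw [hgs]
    exact (hsolv s hs).choose_spec.2 r (mem_filter.mpr ⟨hr, hrs⟩)


section Main
open Finset

/-- Link of a prospective red vertex `x` of the pair `(a,b)` in the constituent on `a<b<t`. -/
def Link1 {q : ℕ} (R : ReducedHG q) (x a b t : ℕ) : Finset (ℕ × ℕ) :=
  (R.P a t ×ˢ R.P b t).filter (fun yz => (x, yz.1, yz.2) ∈ R.A a b t)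

def B3f (K : ℕ) : ℕ → ℕ → ℕ
  | 0, _ => 0
  | n+1, c => K^(c+1) * (B3f K n (c+1) + 1) + 1

variable {q : ℕ} (R : ReducedHG q) (η : ℝ)

lemma avgMarkov3 (hη : 0 < η) (hD : R.Dense η) (a b : ℕ) (hab : a < b) (hbq : b < q)
    (T : Finset ℕ) (hTq : ∀ t ∈ T, t < q) (hbT : ∀ t ∈ T, b < t) :
    ∃ x ∈ R.P a b, ∃ T' ⊆ T, (η/2) * T.card ≤ (T'.card : ℝ) ∧
      ∀ t ∈ T', (η/2) * ((R.P a t).card : ℝ) * ((R.P b t).card : ℝ) ≤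
        ((Link1 R x a b t).card : ℝ) := by
  classical
  have habq : a < q := lt_trans hab hbq
  have hPab : (R.P a b).Nonempty := R.P_nonempty a b habq hbq (by omega)
  have hPpos : ∀ t ∈ T, (0:ℝ) < ((R.P a t).card : ℝ) ∧ (0:ℝ) < ((R.P b t).card : ℝ) := by
    intro t ht
    constructor
    · exact_mod_cast card_pos.mpr (R.P_nonempty a t habq (hTq t ht) (by have := hbT t ht; omega))
    · exact_mod_cast card_pos.mpr (R.P_nonempty b t hbq (hTq t ht) (by have := hbT t ht; omega))
  set w : ℕ → ℕ → ℝ := fun x t =>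
    ((Link1 R x a b t).card : ℝ) / (((R.P a t).card : ℝ) * ((R.P b t).card : ℝ)) with hw
  have havg : ∀ t ∈ T, η * ((R.P a b).card : ℝ) ≤ ∑ x ∈ R.P a b, w x t := by
    intro t ht
    obtain ⟨hpa, hpb⟩ := hPpos t ht
    have hsum : ((R.A a b t).card : ℝ) = ∑ x ∈ R.P a b, ((Link1 R x a b t).card : ℝ) := by
      rw [card_A_eq_sum (R.P a b) (R.P a t) (R.P b t) (R.A a b t)
        (R.A_sub a b t hab (hbT t ht) (hTq t ht))]
      push_cast
      rfl
    have hd := hD a b t hab (hbT t ht) (hTq t ht)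
    have hrw : ∑ x ∈ R.P a b, w x t =
        (∑ x ∈ R.P a b, ((Link1 R x a b t).card : ℝ)) /
          (((R.P a t).card : ℝ) * ((R.P b t).card : ℝ)) := by
      rw [hw, ← sum_div]
    rw [hrw, ← hsum, le_div_iff₀ (by positivity)]
    nlinarith [hd]
  obtain ⟨x, hx, hxsum⟩ := exists_good_vertex (R.P a b) hPab T w η havg
  obtain ⟨T', hT'sub, hT'card, hT'prop⟩ := shrink_reservoir T (w x) η (le_of_lt hη)
    (fun t ht => by
      rw [hw]
      simp only
      obtain ⟨hpa, hpb⟩ := hPpos t ht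
      rw [div_le_one (by positivity)]
      have hle : (Link1 R x a b t).card ≤ (R.P a t).card * (R.P b t).card := by
        calc (Link1 R x a b t).card ≤ ((R.P a t ×ˢ R.P b t)).card :=
          card_le_card (filter_subset _ _)
        _ = (R.P a t).card * (R.P b t).card := card_product _ _
      exact_mod_cast hle) hxsum
  refine ⟨x, hx, T', hT'sub, hT'card, fun t ht => ?_⟩
  have h1 := hT'prop t ht
  rw [hw] at h1
  simp only at h1
  obtain ⟨hpa, hpb⟩ := hPpos t (hT'sub ht)
  rw [le_div_iff₀ (by positivity)] at h1
  nlinarith [h1]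

lemma inner3 (hη : 0 < η) (hD : R.Dense η) (b₀ : ℕ) (hb₀ : b₀ < q) (C : Finset ℕ)
    (hCb : ∀ a ∈ C, a < b₀) :
    ∀ (T : Finset ℕ), (∀ t ∈ T, t < q) → (∀ t ∈ T, b₀ < t) →
    ∃ (rr : ℕ → ℕ) (T' : Finset ℕ), T' ⊆ T ∧ ((η/2)^C.card * T.card ≤ (T'.card : ℝ)) ∧
      ∀ a ∈ C, rr a ∈ R.P a b₀ ∧ ∀ t ∈ T',
        (η/2) * ((R.P a t).card:ℝ) * ((R.P b₀ t).card:ℝ) ≤ ((Link1 R (rr a) a b₀ t).card : ℝ) := by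
  classical
  induction C using Finset.induction_on with
  | empty =>
    intro T _ _
    refine ⟨fun _ => 0, T, le_refl T, by simp, by simp⟩
  | @insert a C' haC' ih =>
    intro T hTq hbT
    have hCb' : ∀ x ∈ C', x < b₀ := fun x hx => hCb x (mem_insert_of_mem hx)
    obtain ⟨rr, T₁, hT₁sub, hT₁card, hT₁prop⟩ := ih hCb' T hTq hbT
    have hab₀ : a < b₀ := hCb a (mem_insert_self a C')
    obtain ⟨x, hxP, T₂, hT₂sub, hT₂card, hT₂prop⟩ := avgMarkov3 R η hη hD a b₀ hab₀ hb₀ T₁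
      (fun t ht => hTq t (hT₁sub ht)) (fun t ht => hbT t (hT₁sub ht))
    refine ⟨Function.update rr a x, T₂, hT₂sub.trans hT₁sub, ?_, ?_⟩
    · rw [card_insert_of_notMem haC']
      have h1 : (η/2) * ((η/2)^C'.card * (T.card : ℝ)) ≤ (η/2) * (T₁.card : ℝ) := by
        have hpos : (0:ℝ) < η/2 := by positivity
        nlinarith [hT₁card]
      calc (η/2)^(C'.card + 1) * (T.card : ℝ) = (η/2) * ((η/2)^C'.card * (T.card : ℝ)) := by ring
      _ ≤ (η/2) * (T₁.card : ℝ) := h1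
      _ ≤ (T₂.card : ℝ) := hT₂card
    · intro a' ha'
      rcases mem_insert.mp ha' with ha'a | ha'C
      · subst ha'a
        rw [Function.update_self]
        exact ⟨hxP, fun t ht => hT₂prop t ht⟩
      · rw [Function.update_of_ne (fun hEq => haC' (by rw [← hEq]; exact ha'C)) _ _]
        obtain ⟨h1, h2⟩ := hT₁prop a' ha'C
        exact ⟨h1, fun t ht => h2 t (hT₂sub ht)⟩

lemma greedy3 (hη : 0 < η) (hD : R.Dense η) :
    ∀ (n : ℕ) (C : Finset ℕ) (red : ℕ → ℕ → ℕ) (T : Finset ℕ),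
      C ⊆ range q → T ⊆ range q → (∀ c ∈ C, ∀ t ∈ T, c < t) →
      B3f (2 * (⌈1/η⌉₊ + 1)) n C.card ≤ T.card →
      (∀ a ∈ C, ∀ b ∈ C, a < b → red a b ∈ R.P a b ∧
        (∀ t ∈ C, b < t →
          (η/2) * ((R.P a t).card:ℝ) * ((R.P b t).card:ℝ) ≤ ((Link1 R (red a b) a b t).card : ℝ)) ∧
        (∀ t ∈ T,
          (η/2) * ((R.P a t).card:ℝ) * ((R.P b t).card:ℝ) ≤ ((Link1 R (red a b) a b t).card : ℝ))) →
      ∃ (C' : Finset ℕ) (red' : ℕ → ℕ → ℕ), C' ⊆ range q ∧ C'.card = C.card + n ∧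
        ∀ a ∈ C', ∀ b ∈ C', a < b → red' a b ∈ R.P a b ∧ ∀ t ∈ C', b < t →
          (η/2) * ((R.P a t).card:ℝ) * ((R.P b t).card:ℝ) ≤ ((Link1 R (red' a b) a b t).card : ℝ) := by
  classical
  intro n
  induction n with
  | zero =>
    intro C red T hCq _ _ _ hinv
    exact ⟨C, red, hCq, by omega, fun a ha b hb hab =>
      ⟨(hinv a ha b hb hab).1, fun t ht hbt => (hinv a ha b hb hab).2.1 t ht hbt⟩⟩
  | succ n ihn =>
    intro C red T hCq hTq hCT hTcard hinv
    set K := 2 * (⌈1/η⌉₊ + 1) with hK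
    have hKone : (1:ℝ) ≤ (η/2) * K := by
      have h1 : (1:ℝ)/η ≤ (⌈1/η⌉₊ : ℝ) := Nat.le_ceil _
      have hKc : (K:ℝ) = 2 * ((⌈1/η⌉₊ : ℝ) + 1) := by rw [hK]; push_cast; ring
      rw [hKc]
      calc (1:ℝ) = η * (1/η) := by field_simp
      _ ≤ η * ((⌈1/η⌉₊ : ℝ) + 1) := by nlinarith
      _ = η/2 * (2 * ((⌈1/η⌉₊ : ℝ) + 1)) := by ring
    have hB3succ : B3f K (n+1) C.card = K^(C.card+1) * (B3f K n (C.card+1) + 1) + 1 := rfl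
    have hTne : T.Nonempty := by
      rw [← card_pos]
      have hKpos : 0 < K := by rw [hK]; omega
      have : 0 < K^(C.card+1) * (B3f K n (C.card+1) + 1) + 1 := by positivity
      omega
    set a₀ := T.min' hTne with ha₀
    have ha₀T : a₀ ∈ T := T.min'_mem hTne
    have ha₀q : a₀ < q := mem_range.mp (hTq ha₀T)
    set T₀ := T.erase a₀ with hT₀
    have hT₀sub : T₀ ⊆ T := erase_subset _ _
    have ha₀T₀ : ∀ t ∈ T₀, a₀ < t := fun t ht =>
      lt_of_le_of_ne (T.min'_le t (hT₀sub ht)) (Ne.symm (mem_erase.mp ht).1)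
    have hCa₀ : ∀ c ∈ C, c < a₀ := fun c hc => hCT c hc a₀ ha₀T
    obtain ⟨rr, T₂, hT₂sub, hT₂card, hT₂prop⟩ := inner3 R η hη hD a₀ ha₀q C hCa₀ T₀
      (fun t ht => mem_range.mp (hTq (hT₀sub ht))) ha₀T₀
    -- size chain
    have hT₂big : B3f K n (C.card + 1) ≤ T₂.card := by
      set c := C.card with hc
      set X := B3f K n (c+1) with hX
      have h1 : K^(c+1) * (X + 1) ≤ T₀.card := by
        rw [hT₀, card_erase_of_mem ha₀T]
        omega
      have hKR : (1:ℝ) ≤ (K:ℝ) := by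
        have : 2 ≤ K := by rw [hK]; omega
        exact_mod_cast le_trans (by norm_num) this
      have hpow : (1:ℝ) ≤ ((η/2) * K)^c := one_le_pow₀ hKone
      have hXpos : (0:ℝ) ≤ (X:ℝ) + 1 := by positivity
      have t1 : ((X:ℝ) + 1) ≤ (K:ℝ) * ((X:ℝ)+1) := by nlinarith
      have t2 : (K:ℝ) * ((X:ℝ)+1) ≤ ((η/2)*K)^c * ((K:ℝ)*((X:ℝ)+1)) := by
        have hKX : (0:ℝ) ≤ (K:ℝ) * ((X:ℝ)+1) := by positivity
        nlinarith
      have t3 : ((η/2)*(K:ℝ))^c * ((K:ℝ)*((X:ℝ)+1)) = (η/2)^c * ((K:ℝ)^(c+1) * ((X:ℝ)+1)) := by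
        rw [mul_pow, pow_succ]
        ring
      have t4 : (η/2)^c * ((K:ℝ)^(c+1) * ((X:ℝ)+1)) ≤ (η/2)^c * (T₀.card : ℝ) := by
        have hcast : ((K:ℝ)^(c+1) * ((X:ℝ)+1)) ≤ (T₀.card : ℝ) := by exact_mod_cast h1
        have hpnn : (0:ℝ) ≤ (η/2)^c := by positivity
        nlinarith
      have t5 : ((X:ℝ)+1) ≤ (T₂.card : ℝ) := by
        calc ((X:ℝ)+1) ≤ (K:ℝ) * ((X:ℝ)+1) := t1
        _ ≤ ((η/2)*K)^c * ((K:ℝ)*((X:ℝ)+1)) := t2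
        _ = (η/2)^c * ((K:ℝ)^(c+1) * ((X:ℝ)+1)) := t3
        _ ≤ (η/2)^c * (T₀.card : ℝ) := t4
        _ ≤ (T₂.card : ℝ) := hT₂card
      have : (X:ℝ) ≤ (T₂.card : ℝ) := by linarith
      exact_mod_cast this
    -- new red and invariant
    set red' : ℕ → ℕ → ℕ := fun x y => if y = a₀ then rr x else red x y with hred'
    have ha₀C : a₀ ∉ C := fun hmem => absurd (hCa₀ a₀ hmem) (lt_irrefl a₀)
    have hinv' : ∀ a ∈ insert a₀ C, ∀ b ∈ insert a₀ C, a < b → red' a b ∈ R.P a b ∧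
        (∀ t ∈ insert a₀ C, b < t →
          (η/2) * ((R.P a t).card:ℝ) * ((R.P b t).card:ℝ) ≤ ((Link1 R (red' a b) a b t).card : ℝ)) ∧
        (∀ t ∈ T₂,
          (η/2) * ((R.P a t).card:ℝ) * ((R.P b t).card:ℝ) ≤ ((Link1 R (red' a b) a b t).card : ℝ)) := by
      intro a ha b hb hab
      rcases mem_insert.mp hb with hba | hbC
      · -- b = a₀ : new pair (a, a₀), a ∈ C
        subst hba
        have haC : a ∈ C := by
          rcases mem_insert.mp ha with h | h
          · omega
          · exact h
        have hred'aa₀ : red' a a₀ = rr a := by rw [hred']; simp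
        rw [hred'aa₀]
        obtain ⟨hm, hdn⟩ := hT₂prop a haC
        refine ⟨hm, ?_, fun t ht => hdn t ht⟩
        intro t ht hbt
        rcases mem_insert.mp ht with h | h
        · omega
        · exact absurd (hCa₀ t h) (by omega)
      · -- b ∈ C
        have haC : a ∈ C := by
          rcases mem_insert.mp ha with h | h
          · exact absurd (hCa₀ b hbC) (by omega)
          · exact h
        have hba₀ : b ≠ a₀ := by
          have := hCa₀ b hbC; omega
        have hred'ab : red' a b = red a b := by rw [hred']; simp [hba₀]
        rw [hred'ab]
        obtain ⟨hm, hdC, hdT⟩ := hinv a haC b hbC hab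
        refine ⟨hm, ?_, fun t ht => hdT t (hT₀sub (hT₂sub ht))⟩
        intro t ht hbt
        rcases mem_insert.mp ht with h | h
        · subst h
          exact hdT a₀ ha₀T
        · exact hdC t h hbt
    obtain ⟨C', red'', hC'q, hC'card, hC'inv⟩ := ihn (insert a₀ C) red' T₂
      (by
        intro x hx
        rcases mem_insert.mp hx with h | h
        · exact h ▸ hTq ha₀T
        · exact hCq h)
      ((hT₂sub.trans hT₀sub).trans hTq)
      (by
        intro c hc t ht
        rcases mem_insert.mp hc with h | h
        · exact h ▸ ha₀T₀ t (hT₂sub ht)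
        · exact hCT c h t (hT₀sub (hT₂sub ht)))
      (by rw [card_insert_of_notMem ha₀C]; exact hT₂big)
      hinv'
    refine ⟨C', red'', hC'q, ?_, hC'inv⟩
    rw [hC'card, card_insert_of_notMem ha₀C]
    omega


/-- Given `η > 0` and `h`, there is `q` such that every
`η`-dense reduced hypergraph with index set `[q]` contains indices
`λ(1) < ⋯ < λ(h)` and, for each pair `r < s`, vertices
`P^{λ(r)λ(s)}_red, P^{λ(r)λ(s)}_blue, P^{λ(r)λ(s)}_green ∈ P^{λ(r)λ(s)}` such that
for all `r < s < t` the vertices `P^{λ(r)λ(s)}_red, P^{λ(r)λ(t)}_blue,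
P^{λ(s)λ(t)}_green` form an edge of the constituent `A^{λ(r)λ(s)λ(t)}`. -/
theorem reduced_hypergraph_embedding (η : ℝ) (hη : 0 < η) (h : ℕ) :
    ∃ q : ℕ, ∀ R : ReducedHG q, R.Dense η →
      ∃ lam : Fin h → ℕ, StrictMono lam ∧ (∀ r, lam r < q) ∧
        ∃ Pr Pb Pg : ℕ → ℕ → ℕ,
          (∀ r s : Fin h, r < s →
            Pr (lam r) (lam s) ∈ R.P (lam r) (lam s) ∧
            Pb (lam r) (lam s) ∈ R.P (lam r) (lam s) ∧
            Pg (lam r) (lam s) ∈ R.P (lam r) (lam s)) ∧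
          ∀ r s t : Fin h, r < s → s < t →
            (Pr (lam r) (lam s), Pb (lam r) (lam t), Pg (lam s) (lam t)) ∈
              R.A (lam r) (lam s) (lam t) := by
  classical
  obtain ⟨n₂, hn₂⟩ := twoDim (η/2) (by positivity) h
  set H3 := n₂ + 1 + h with hH3
  obtain ⟨N3, hN3⟩ := hyperRamsey h (Fin h → Bool) inferInstance H3
  set K := 2 * (⌈1/η⌉₊ + 1) with hK
  refine ⟨B3f K N3 0, ?_⟩
  intro R hD
  -- greedy phase: choose red vertices with dense links
  obtain ⟨C, red, hCq, hCcard, hCinv⟩ := greedy3 R η hη hD N3 ∅ (fun _ _ => 0)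
    (range (B3f K N3 0)) (empty_subset _) (Finset.Subset.refl _) (by simp)
    (by rw [card_empty, card_range]) (by simp)
  rw [card_empty, zero_add] at hCcard
  have hCrange : ∀ x ∈ C, x < B3f K N3 0 := fun x hx => mem_range.mp (hCq hx)
  -- Ramsey phase
  set Solv3 : Finset ℕ → ℕ → Prop := fun Kf t => ∃ bf gf : ℕ → ℕ,
    (∀ r ∈ Kf, bf r ∈ R.P r t ∧ gf r ∈ R.P r t) ∧
    (∀ r ∈ Kf, ∀ s ∈ Kf, r < s → (bf r, gf s) ∈ Link1 R (red r s) r s t) with hSolv3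
  set χ : Finset ℕ → (Fin h → Bool) := fun D p =>
    if (∀ t ∈ D, (D.filter (· < t)).card = p.val → Solv3 (D.filter (· < t)) t)
    then true else false with hχ
  obtain ⟨M, hMC, hMcard, hMmono⟩ := hN3 C (le_of_eq hCcard.symm) χ
  -- split M
  obtain ⟨pool, hpoolM, hpoolcard, hpoolmin⟩ := take_smallest n₂ M (by omega)
  have hRstcard : (M \ pool).card = 1 + h := by
    rw [card_sdiff_of_subset hpoolM]
    omega
  have hRstne : (M \ pool).Nonempty := by
    rw [← card_pos, hRstcard]; omega
  set t₀ := (M \ pool).min' hRstne with ht₀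
  have ht₀M : t₀ ∈ M := (mem_sdiff.mp ((M \ pool).min'_mem hRstne)).1
  have ht₀C : t₀ ∈ C := hMC ht₀M
  have hpoolt₀ : ∀ x ∈ pool, x < t₀ := fun x hx => hpoolmin x hx t₀ ((M \ pool).min'_mem hRstne)
  set U := (M \ pool).erase t₀ with hU
  have hUcard : U.card = h := by
    rw [hU, card_erase_of_mem ((M \ pool).min'_mem hRstne), hRstcard]
    omega
  have hUgt : ∀ u ∈ U, t₀ < u := by
    intro u hu
    exact lt_of_le_of_ne ((M \ pool).min'_le u (erase_subset _ _ hu))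
      (Ne.symm (mem_erase.mp hu).1)
  have hUM : U ⊆ M := fun u hu => (mem_sdiff.mp (erase_subset _ _ hu)).1
  -- each bit of the colouring is true on all h-subsets of M
  have hbits : ∀ p : Fin h, ∀ D, D ⊆ M → D.card = h → χ D p = true := by
    intro p D hDM hDcard
    -- build the exhibit using the two-dimensional theorem
    obtain ⟨J, bf, gf, hJpool, hJcard, hJmem, hJpairs⟩ := hn₂ pool
      (fun r => R.P r t₀) (fun r s => Link1 R (red r s) r s t₀)
      (le_of_eq hpoolcard.symm)
      (by
        intro i hi
        exact R.P_nonempty i t₀ (hCrange i (hMC (hpoolM hi))) (hCrange t₀ ht₀C)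
          (by have := hpoolt₀ i hi; omega))
      (fun r _ s _ _ => filter_subset _ _)
      (by
        intro r hr s hs hrs
        exact (hCinv r (hMC (hpoolM hr)) s (hMC (hpoolM hs)) hrs).2 t₀ ht₀C (hpoolt₀ s hs))
    obtain ⟨K', hK'J, hK'card, _⟩ := take_smallest p.val J (by rw [hJcard]; exact le_of_lt p.2)
    have hsolvK' : Solv3 K' t₀ := by
      rw [hSolv3]
      exact ⟨bf, gf, fun r hr => hJmem r (hK'J hr),
        fun r hr s hs hrs => hJpairs r (hK'J hr) s (hK'J hs) hrs⟩
    obtain ⟨U', hU'U, hU'card⟩ := exists_subset_card_eq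
      (show h - 1 - p.val ≤ U.card by omega)
    set D' := K' ∪ {t₀} ∪ U' with hD'
    have hKlt : ∀ x ∈ K', x < t₀ := fun x hx => hpoolt₀ x (hJpool (hK'J hx))
    have hU'gt : ∀ x ∈ U', t₀ < x := fun x hx => hUgt x (hU'U hx)
    have hD'card : D'.card = h := by
      rw [hD', card_split K' U' t₀ hKlt hU'gt, hK'card, hU'card]
      have := p.2
      omega
    have hD'M : D' ⊆ M := by
      intro x hx
      rw [hD'] at hx
      rcases mem_union.mp hx with hx | hx
      · rcases mem_union.mp hx with hx | hx
        · exact hpoolM (hJpool (hK'J hx))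
        · rw [mem_singleton] at hx; exact hx ▸ ht₀M
      · exact hUM (hU'U hx)
    have hD'filter : D'.filter (· < t₀) = K' := by
      rw [hD']; exact filter_split K' U' t₀ hKlt hU'gt
    have ht₀D' : t₀ ∈ D' := by
      rw [hD']
      exact mem_union_left _ (mem_union_right _ (mem_singleton_self t₀))
    have hχD' : χ D' p = true := by
      rw [hχ]
      simp only
      rw [if_pos]
      intro t ht hrank
      have hteq : t = t₀ := by
        refine rank_unique D' t t₀ ht ht₀D' ?_
        rw [hD'filter, hK'card, hrank]
      subst hteq
      rw [hD'filter]
      exact hsolvK'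
    rw [← hχD']
    exact congr_fun (hMmono D hDM hDcard D' hD'M hD'card) p
  -- final extraction
  obtain ⟨Λ, hΛM, hΛcard, _⟩ := take_smallest h M (by omega)
  have hΛC : Λ ⊆ C := hΛM.trans hMC
  have hsolv : ∀ j ∈ Λ, Solv3 (Λ.filter (· < j)) j := by
    intro j hj
    have hrank : (Λ.filter (· < j)).card < h := by
      have := rank_lt_card Λ j hj
      omega
    set p : Fin h := ⟨(Λ.filter (· < j)).card, hrank⟩ with hp
    have hb := hbits p Λ hΛM hΛcard
    rw [hχ] at hb
    simp only at hb
    by_cases hcond : (∀ t ∈ Λ, (Λ.filter (· < t)).card = p.val →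
        Solv3 (Λ.filter (· < t)) t)
    · exact hcond j hj rfl
    · rw [if_neg hcond] at hb
      exact absurd hb (by simp)
  set Bc : ℕ → ℕ → ℕ := fun j =>
    if hj : Solv3 (Λ.filter (· < j)) j then hj.choose else fun _ => 0 with hBc
  set Gc : ℕ → ℕ → ℕ := fun j =>
    if hj : Solv3 (Λ.filter (· < j)) j then hj.choose_spec.choose else fun _ => 0 with hGc
  have hBG : ∀ j ∈ Λ,
      (∀ r ∈ Λ.filter (· < j), Bc j r ∈ R.P r j ∧ Gc j r ∈ R.P r j) ∧
      (∀ r ∈ Λ.filter (· < j), ∀ s ∈ Λ.filter (· < j), r < s →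
        (Bc j r, Gc j s) ∈ Link1 R (red r s) r s j) := by
    intro j hj
    have hs := hsolv j hj
    have hBceq : Bc j = hs.choose := by rw [hBc]; simp only; rw [dif_pos hs]
    have hGceq : Gc j = hs.choose_spec.choose := by rw [hGc]; simp only; rw [dif_pos hs]
    rw [hBceq, hGceq]
    exact hs.choose_spec.choose_spec
  set lam : Fin h → ℕ := fun p => (Λ.orderIsoOfFin hΛcard p : ℕ) with hlam
  have hlamΛ : ∀ p, lam p ∈ Λ := fun p => (Λ.orderIsoOfFin hΛcard p).2
  have hlammono : StrictMono lam := by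
    intro a b hab
    exact (Λ.orderIsoOfFin hΛcard).strictMono hab
  refine ⟨lam, hlammono, fun r => hCrange _ (hΛC (hlamΛ r)), red,
    (fun a c => Bc c a), (fun a c => Gc c a), ?_, ?_⟩
  · intro r s hrs
    have hlt : lam r < lam s := hlammono hrs
    have hmemf : lam r ∈ Λ.filter (· < lam s) := mem_filter.mpr ⟨hlamΛ r, hlt⟩
    obtain ⟨hmem, _⟩ := hBG (lam s) (hlamΛ s)
    exact ⟨(hCinv (lam r) (hΛC (hlamΛ r)) (lam s) (hΛC (hlamΛ s)) hlt).1,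
      (hmem (lam r) hmemf).1, (hmem (lam r) hmemf).2⟩
  · intro r s t hrs hst
    have hlt_rs : lam r < lam s := hlammono hrs
    have hlt_st : lam s < lam t := hlammono hst
    have hmemr : lam r ∈ Λ.filter (· < lam t) :=
      mem_filter.mpr ⟨hlamΛ r, lt_trans hlt_rs hlt_st⟩
    have hmems : lam s ∈ Λ.filter (· < lam t) := mem_filter.mpr ⟨hlamΛ s, hlt_st⟩
    obtain ⟨_, hpairs⟩ := hBG (lam t) (hlamΛ t)
    have hin := hpairs (lam r) hmemr (lam s) hmems hlt_rs
    rw [Link1, mem_filter] at hin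
    exact hin.2


end Main
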